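/- Let Ω ⊆ ℂ be an open set and a ∈ Ω. Let (h_n) be a sequence of real-valued harmonic functions on Ω that is uniformly bounded on every compact subset of Ω and converges locally uniformly on Ω ∖ {a} to a function h. Then (h_n) converges locally uniformly on all of Ω, and its limit is a harmonic function on Ω extending h. -/

import Mathlib

open Filter Topology

/-- A real-valued function on an open subset of `ℂ` is harmonic if it is continuous and
satisfies the mean value property on all closed discs contained in the domain. -/
def IsHarmonicOn (f : ℂ → ℝ) (Ω : Set ℂ) : Prop :=
  ContinuousOn f Ω ∧ ∀ z : ℂ, ∀ r : ℝ, 0 < r → Metric.closedBall z r ⊆ Ω →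
    f z = (2 * Real.pi)⁻¹ *
      ∫ t in (0:ℝ)..(2 * Real.pi), f (z + r * Complex.exp (t * Complex.I))

section Helpers

lemma tuo_union' {α β ι : Type*} [UniformSpace β] {F : ι → α → β} {f : α → β} {p : Filter ι}
    {s t : Set α} (hs : TendstoUniformlyOn F f p s) (ht : TendstoUniformlyOn F f p t) :
    TendstoUniformlyOn F f p (s ∪ t) := by
  intro u hu
  filter_upwards [hs u hu, ht u hu] with n h1 h2 x hx
  rcases hx with hx | hx
  · exact h1 x hx
  · exact h2 x hx

lemma cont_circle (z : ℂ) (s : ℝ) :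
    Continuous fun t : ℝ => z + s * Complex.exp (t * Complex.I) :=
  continuous_const.add (continuous_const.mul
    (Complex.continuous_exp.comp (Complex.continuous_ofReal.mul continuous_const)))

lemma dist_circle (z : ℂ) {s : ℝ} (hs : 0 ≤ s) (t : ℝ) :
    dist (z + s * Complex.exp (t * Complex.I)) z = s := by
  rw [dist_eq_norm, add_sub_cancel_left, norm_mul,
    Complex.norm_exp_ofReal_mul_I, mul_one, Complex.norm_real, Real.norm_eq_abs, abs_of_nonneg hs]

lemma integ_circ {f : ℂ → ℝ} {K : Set ℂ} (hf : ContinuousOn f K) (z : ℂ) (s : ℝ)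
    (hmap : ∀ t : ℝ, z + s * Complex.exp (t * Complex.I) ∈ K) :
    IntervalIntegrable (fun t => f (z + s * Complex.exp (t * Complex.I)))
      MeasureTheory.volume 0 (2 * Real.pi) :=
  (hf.comp_continuous (cont_circle z s) hmap).intervalIntegrable _ _

lemma circ_tendsto {F : ℕ → ℂ → ℝ} {G : ℂ → ℝ} {K : Set ℂ} (z : ℂ) (s : ℝ)
    (hmap : ∀ t : ℝ, z + s * Complex.exp (t * Complex.I) ∈ K)
    (hF : ∀ n, ContinuousOn (F n) K)
    (hTU : TendstoUniformlyOn F G atTop K) :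
    Tendsto (fun n => ∫ t in (0:ℝ)..(2 * Real.pi), F n (z + s * Complex.exp (t * Complex.I)))
      atTop (𝓝 (∫ t in (0:ℝ)..(2 * Real.pi), G (z + s * Complex.exp (t * Complex.I)))) := by
  have hG : ContinuousOn G K := hTU.continuousOn (Eventually.of_forall hF).frequently
  have hGint := integ_circ hG z s hmap
  have hFint : ∀ n, IntervalIntegrable
      (fun t => F n (z + s * Complex.exp (t * Complex.I)))
      MeasureTheory.volume 0 (2 * Real.pi) := fun n => integ_circ (hF n) z s hmap
  rw [Metric.tendsto_atTop]
  intro ε hε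
  have hπ : (0:ℝ) < Real.pi := Real.pi_pos
  have hε' : 0 < ε / (2 * Real.pi + 1) := by positivity
  obtain ⟨N, hN⟩ := eventually_atTop.1 ((Metric.tendstoUniformlyOn_iff.1 hTU) _ hε')
  refine ⟨N, fun n hn => ?_⟩
  have hbound : ∀ t ∈ Set.uIoc (0:ℝ) (2 * Real.pi),
      ‖F n (z + s * Complex.exp (t * Complex.I)) - G (z + s * Complex.exp (t * Complex.I))‖
        ≤ ε / (2 * Real.pi + 1) := by
    intro t _
    have := hN n hn _ (hmap t)
    rw [Real.dist_eq, abs_sub_comm] at this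
    exact le_of_lt this
  calc dist (∫ t in (0:ℝ)..(2 * Real.pi), F n (z + s * Complex.exp (t * Complex.I)))
        (∫ t in (0:ℝ)..(2 * Real.pi), G (z + s * Complex.exp (t * Complex.I)))
      = ‖∫ t in (0:ℝ)..(2 * Real.pi),
          (F n (z + s * Complex.exp (t * Complex.I))
            - G (z + s * Complex.exp (t * Complex.I)))‖ := by
        rw [dist_eq_norm, intervalIntegral.integral_sub (hFint n) hGint]
    _ ≤ ε / (2 * Real.pi + 1) * |2 * Real.pi - 0| :=
        intervalIntegral.norm_integral_le_of_norm_le_const hbound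
    _ < ε := by
        rw [sub_zero, abs_of_pos (by positivity)]
        rw [div_mul_eq_mul_div, div_lt_iff₀ (by positivity)]
        nlinarith

end Helpers

/-- **Removable-point convergence for harmonic functions.** If a sequence of harmonic functions
on an open set `Ω ⊆ ℂ` is uniformly bounded on every compact subset of `Ω` and converges locally
uniformly on `Ω ∖ {a}` to `g`, then it converges locally uniformly on all of `Ω`, and the limit
is a harmonic function on `Ω` extending `g`. -/
theorem stmt_16 (Ω : Set ℂ) (hΩ : IsOpen Ω) (a : ℂ) (ha : a ∈ Ω)
    (h : ℕ → ℂ → ℝ) (hharm : ∀ n, IsHarmonicOn (h n) Ω)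
    (hbound : ∀ K : Set ℂ, K ⊆ Ω → IsCompact K → ∃ C : ℝ, ∀ n, ∀ z ∈ K, |h n z| ≤ C)
    (g : ℂ → ℝ)
    (hconv : TendstoLocallyUniformlyOn h g atTop (Ω \ {a})) :
    ∃ H : ℂ → ℝ, IsHarmonicOn H Ω ∧ (∀ z ∈ Ω \ {a}, H z = g z) ∧
      TendstoLocallyUniformlyOn h H atTop Ω := by
  classical
  have hπ : (0:ℝ) < Real.pi := Real.pi_pos
  obtain ⟨ε, hε, hball⟩ := Metric.isOpen_iff.1 hΩ a ha
  set r : ℝ := ε / 3 with hr_def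
  have hr : 0 < r := by positivity
  have h2r : Metric.closedBall a (2 * r) ⊆ Ω :=
    (Metric.closedBall_subset_ball (by rw [hr_def]; linarith)).trans hball
  have hΩ' : IsOpen (Ω \ {a}) := hΩ.sdiff isClosed_singleton
  -- uniform convergence on compact subsets of Ω \ {a}
  have hUC : ∀ K : Set ℂ, K ⊆ Ω \ {a} → IsCompact K → TendstoUniformlyOn h g atTop K :=
    (tendstoLocallyUniformlyOn_iff_forall_isCompact hΩ').1 hconv
  -- the sphere of radius r around a
  have hsph_sub : Metric.sphere a r ⊆ Ω \ {a} := by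
    intro w hw
    rw [Metric.mem_sphere] at hw
    refine ⟨h2r ?_, ?_⟩
    · rw [Metric.mem_closedBall, hw]; linarith
    · simp only [Set.mem_singleton_iff]
      intro hwa
      rw [hwa, dist_self] at hw
      exact absurd hw.symm (ne_of_gt hr)
  -- the annulus
  set K₀ : Set ℂ := Metric.closedBall a (2 * r) \ Metric.ball a (r / 2) with hK₀_def
  have hK₀_cpt : IsCompact K₀ := (isCompact_closedBall a (2 * r)).diff Metric.isOpen_ball
  have hK₀_sub : K₀ ⊆ Ω \ {a} := by
    intro w hw
    refine ⟨h2r hw.1, ?_⟩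
    simp only [Set.mem_singleton_iff]
    intro hwa
    exact hw.2 (by rw [hwa]; exact Metric.mem_ball_self (by linarith))
  -- circles around points of the small ball lie in the annulus
  have hmapK₀ : ∀ z ∈ Metric.closedBall a (r / 2), ∀ t : ℝ,
      z + r * Complex.exp (t * Complex.I) ∈ K₀ := by
    intro z hz t
    rw [Metric.mem_closedBall] at hz
    have hd := dist_circle z hr.le t
    constructor
    · rw [Metric.mem_closedBall]
      calc dist (z + r * Complex.exp (t * Complex.I)) a
          ≤ dist (z + r * Complex.exp (t * Complex.I)) z + dist z a := dist_triangle _ _ _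
        _ ≤ r + r / 2 := by rw [hd]; linarith
        _ ≤ 2 * r := by linarith
    · rw [Metric.mem_ball, not_lt]
      have htri : dist (z + r * Complex.exp (t * Complex.I)) z
          ≤ dist (z + r * Complex.exp (t * Complex.I)) a + dist a z := dist_triangle _ _ _
      rw [hd] at htri
      rw [dist_comm a z] at htri
      linarith
  -- closed balls of radius r around points of the small ball lie in Ω
  have hballs : ∀ z ∈ Metric.closedBall a (r / 2), Metric.closedBall z r ⊆ Ω := by
    intro z hz w hw
    rw [Metric.mem_closedBall] at hz hw
    apply h2r
    rw [Metric.mem_closedBall]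
    calc dist w a ≤ dist w z + dist z a := dist_triangle _ _ _
      _ ≤ 2 * r := by linarith
  -- the limit function
  set H : ℂ → ℝ := fun z => if z = a then
      (2 * Real.pi)⁻¹ * ∫ t in (0:ℝ)..(2 * Real.pi), g (a + r * Complex.exp (t * Complex.I))
    else g z with hH_def
  have hHg : ∀ z ∈ Ω \ {a}, H z = g z := by
    intro z hz
    have : z ≠ a := by simpa using hz.2
    simp [hH_def, this]
  -- pointwise convergence on the small closed ball
  have hpt : ∀ z ∈ Metric.closedBall a (r / 2), Tendsto (fun n => h n z) atTop (𝓝 (H z)) := by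
    intro z hz
    by_cases hza : z = a
    · subst hza
      have hmean : ∀ n, h n z = (2 * Real.pi)⁻¹ *
          ∫ t in (0:ℝ)..(2 * Real.pi), h n (z + r * Complex.exp (t * Complex.I)) :=
        fun n => (hharm n).2 z r hr (hballs z hz)
      have hmapS : ∀ t : ℝ, z + r * Complex.exp (t * Complex.I) ∈ Metric.sphere z r :=
        fun t => by rw [Metric.mem_sphere]; exact dist_circle z hr.le t
      have hsphz : Metric.sphere z r ⊆ Ω \ {z} := hsph_sub
      have hTUs : TendstoUniformlyOn h g atTop (Metric.sphere z r) :=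
        hUC _ hsphz (isCompact_sphere z r)
      have hint := (circ_tendsto z r hmapS
        (fun n => (hharm n).1.mono (hsphz.trans Set.diff_subset)) hTUs).const_mul
        ((2 * Real.pi)⁻¹)
      have : H z = (2 * Real.pi)⁻¹ *
          ∫ t in (0:ℝ)..(2 * Real.pi), g (z + r * Complex.exp (t * Complex.I)) := by
        simp [hH_def]
      rw [this]
      exact hint.congr fun n => (hmean n).symm
    · have hzΩ : z ∈ Ω \ {a} := ⟨hballs z hz (Metric.mem_closedBall_self hr.le), by
        simpa using hza⟩
      have := hconv.tendsto_at hzΩ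
      rwa [← hHg z hzΩ] at this
  -- uniform Cauchy on the small closed ball
  have hcauchy : UniformCauchySeqOn h atTop (Metric.closedBall a (r / 2)) := by
    rw [Metric.uniformCauchySeqOn_iff]
    intro δ hδ
    have hA : TendstoUniformlyOn h g atTop K₀ := hUC K₀ hK₀_sub hK₀_cpt
    obtain ⟨N, hN⟩ := Metric.uniformCauchySeqOn_iff.1 hA.uniformCauchySeqOn (δ / 2)
      (by linarith)
    refine ⟨N, fun m hm n hn z hz => ?_⟩
    have hmeanm := (hharm m).2 z r hr (hballs z hz)
    have hmeann := (hharm n).2 z r hr (hballs z hz)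
    have hintm := integ_circ ((hharm m).1.mono (hK₀_sub.trans Set.diff_subset)) z r
      (hmapK₀ z hz)
    have hintn := integ_circ ((hharm n).1.mono (hK₀_sub.trans Set.diff_subset)) z r
      (hmapK₀ z hz)
    have hbnd : ∀ t ∈ Set.uIoc (0:ℝ) (2 * Real.pi),
        ‖h m (z + r * Complex.exp (t * Complex.I))
          - h n (z + r * Complex.exp (t * Complex.I))‖ ≤ δ / 2 := by
      intro t _
      have := hN m hm n hn _ (hmapK₀ z hz t)
      rw [Real.dist_eq] at this
      exact le_of_lt this
    have key : dist (h m z) (h n z) ≤ δ / 2 := by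
      rw [hmeanm, hmeann, Real.dist_eq, ← mul_sub, abs_mul,
        ← intervalIntegral.integral_sub hintm hintn]
      have h1 : |(2 * Real.pi)⁻¹| = (2 * Real.pi)⁻¹ := abs_of_pos (by positivity)
      have h2 := intervalIntegral.norm_integral_le_of_norm_le_const hbnd
      rw [sub_zero, abs_of_pos (by positivity : (0:ℝ) < 2 * Real.pi)] at h2
      rw [h1]
      calc (2 * Real.pi)⁻¹ * |∫ t in (0:ℝ)..(2 * Real.pi),
            (h m (z + r * Complex.exp (t * Complex.I))
              - h n (z + r * Complex.exp (t * Complex.I)))|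
          ≤ (2 * Real.pi)⁻¹ * (δ / 2 * (2 * Real.pi)) := by
            apply mul_le_mul_of_nonneg_left h2 (by positivity)
        _ = δ / 2 := by field_simp
    linarith
  have hTUball : TendstoUniformlyOn h H atTop (Metric.closedBall a (r / 2)) :=
    hcauchy.tendstoUniformlyOn_of_tendsto hpt
  -- locally uniform convergence on Ω
  have hTLU : TendstoLocallyUniformlyOn h H atTop Ω := by
    rw [tendstoLocallyUniformlyOn_iff_forall_isCompact hΩ]
    intro K hKΩ hK
    have hsplit : K ⊆ (K \ Metric.ball a (r / 2)) ∪ Metric.closedBall a (r / 2) := by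
      intro x hx
      by_cases hxb : x ∈ Metric.ball a (r / 2)
      · exact Or.inr (Metric.ball_subset_closedBall hxb)
      · exact Or.inl ⟨hx, hxb⟩
    have h1 : TendstoUniformlyOn h H atTop (K \ Metric.ball a (r / 2)) := by
      have hsub : K \ Metric.ball a (r / 2) ⊆ Ω \ {a} := by
        intro x hx
        refine ⟨hKΩ hx.1, ?_⟩
        simp only [Set.mem_singleton_iff]
        intro hxa
        exact hx.2 (by rw [hxa]; exact Metric.mem_ball_self (by linarith))
      exact (hUC _ hsub (hK.diff Metric.isOpen_ball)).congr_right
        fun x hx => (hHg x (hsub hx)).symm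
    exact (tuo_union' h1 hTUball).mono hsplit
  -- harmonicity of the limit
  have hHcont : ContinuousOn H Ω :=
    hTLU.continuousOn (Eventually.of_forall fun n => (hharm n).1).frequently
  have hHmean : ∀ z : ℂ, ∀ s : ℝ, 0 < s → Metric.closedBall z s ⊆ Ω →
      H z = (2 * Real.pi)⁻¹ *
        ∫ t in (0:ℝ)..(2 * Real.pi), H (z + s * Complex.exp (t * Complex.I)) := by
    intro z s hs hsub
    have hzΩ : z ∈ Ω := hsub (Metric.mem_closedBall_self hs.le)
    have h1 : Tendsto (fun n => h n z) atTop (𝓝 (H z)) := hTLU.tendsto_at hzΩ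
    have hmapS : ∀ t : ℝ, z + s * Complex.exp (t * Complex.I) ∈ Metric.sphere z s :=
      fun t => by rw [Metric.mem_sphere]; exact dist_circle z hs.le t
    have hsphΩ : Metric.sphere z s ⊆ Ω :=
      Metric.sphere_subset_closedBall.trans hsub
    have hTUs : TendstoUniformlyOn h H atTop (Metric.sphere z s) :=
      (tendstoLocallyUniformlyOn_iff_forall_isCompact hΩ).1 hTLU _ hsphΩ
        (isCompact_sphere z s)
    have h2 := (circ_tendsto z s hmapS (fun n => (hharm n).1.mono hsphΩ) hTUs).const_mul
      ((2 * Real.pi)⁻¹)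
    have hmean : ∀ n, h n z = (2 * Real.pi)⁻¹ *
        ∫ t in (0:ℝ)..(2 * Real.pi), h n (z + s * Complex.exp (t * Complex.I)) :=
      fun n => (hharm n).2 z s hs hsub
    exact tendsto_nhds_unique h1 (h2.congr fun n => (hmean n).symm)
  exact ⟨H, ⟨hHcont, hHmean⟩, hHg, hTLU⟩
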